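/- arXiv:1805.08494 — 5 statements merged into one kernel-verified Lean document; each statement's English description precedes it below -/
import Mathlib

section
/- For any f : ℤ^s → ℂ, the rank of the Hankel operator H(f) equals the dimension of the shift invariant space S(f) = span{τ^α f : α ∈ ℤ^s}; in particular, rank H(f) is finite if and only if dim S(f) is finite, and then the two numbers coincide. -/
open Module Submodule

/-- For a finite-dimensional subspace `W` of functions `X → ℂ`, there is a finite set
`B ⊆ X` such that any `w ∈ W` vanishing on `B` is zero. -/
lemma exists_finset_separating {X : Type} (W : Submodule ℂ (X → ℂ))
    [Module.Finite ℂ W] :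
    ∃ B : Finset X, ∀ w ∈ W, (∀ b ∈ B, w b = 0) → w = 0 := by
  classical
  set K : Finset X → Submodule ℂ (X → ℂ) :=
    fun B => W ⊓ ⨅ b ∈ B, LinearMap.ker (LinearMap.proj b : (X → ℂ) →ₗ[ℂ] ℂ) with hK
  have hKW : ∀ B, K B ≤ W := fun B => inf_le_left
  have hfd : ∀ B, Module.Finite ℂ (K B) := fun B =>
    Submodule.finiteDimensional_of_le (hKW B)
  have hmem : ∀ (B : Finset X) (w : X → ℂ), w ∈ K B ↔ (w ∈ W ∧ ∀ b ∈ B, w b = 0) := by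
    intro B w
    simp [hK, Submodule.mem_inf, Submodule.mem_iInf]
  suffices h : ∀ n (B : Finset X), finrank ℂ (K B) ≤ n → ∃ B', K B' = ⊥ by
    obtain ⟨B', hB'⟩ := h (finrank ℂ (K ∅)) ∅ le_rfl
    refine ⟨B', fun w hw hvan => ?_⟩
    have : w ∈ K B' := (hmem B' w).2 ⟨hw, hvan⟩
    rw [hB'] at this
    simpa using this
  intro n
  induction n with
  | zero =>
    intro B hB
    have := hfd B
    exact ⟨B, Submodule.finrank_eq_zero.mp (Nat.le_zero.mp hB)⟩
  | succ n ih =>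
    intro B hB
    by_cases hbot : K B = ⊥
    · exact ⟨B, hbot⟩
    · obtain ⟨w, hwK, hw0⟩ := Submodule.exists_mem_ne_zero_of_ne_bot hbot
      obtain ⟨x, hx⟩ : ∃ x, w x ≠ 0 := by
        by_contra h
        push_neg at h
        exact hw0 (funext fun x => h x)
      have hle : K (insert x B) ≤ K B := by
        intro v hv
        rw [hmem] at hv ⊢
        exact ⟨hv.1, fun b hb => hv.2 b (Finset.mem_insert_of_mem hb)⟩
      have hlt : K (insert x B) < K B := by
        refine lt_of_le_of_ne hle fun heq => ?_
        have : w ∈ K (insert x B) := heq ▸ hwK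
        exact hx (((hmem _ w).1 this).2 x (Finset.mem_insert_self x B))
      have := hfd B
      have hrk : finrank ℂ (K (insert x B)) < finrank ℂ (K B) :=
        Submodule.finrank_lt_finrank_of_lt hlt
      exact ih (insert x B) (by omega)

open Matrix in
/-- `rank H(f) = dim S(f)` (as extended natural numbers). -/
theorem hankel_rank_eq_dim_shift_invariant_span (s : ℕ) (f : (Fin s → ℤ) → ℂ) :
    (⨆ A : Finset (Fin s → ℤ), ⨆ B : Finset (Fin s → ℤ),
        ((Matrix.rank (Matrix.of fun (a : A) (b : B) => f (a.1 + b.1)) : ℕ∞))) =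
      Cardinal.toENat
        (Module.rank ℂ
          (Submodule.span ℂ (Set.range fun α : Fin s → ℤ => fun x => f (x + α)))) := by
  classical
  let X := Fin s → ℤ
  set g : X → (X → ℂ) := fun α => fun x => f (x + α) with hg
  set V : Submodule ℂ (X → ℂ) := Submodule.span ℂ (Set.range g) with hV
  set L : ℕ∞ := ⨆ A : Finset X, ⨆ B : Finset X,
      ((Matrix.rank (Matrix.of fun (a : A) (b : B) => f (a.1 + b.1)) : ℕ∞)) with hL
  apply le_antisymm
  · -- upper bound : every Hankel matrix has rank ≤ dim V
    refine iSup_le fun A => iSup_le fun B => ?_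
    set resB : (X → ℂ) →ₗ[ℂ] (B → ℂ) :=
      LinearMap.funLeft ℂ ℂ (fun b : B => (b : X)) with hres
    set M : Matrix A B ℂ := Matrix.of fun (a : A) (b : B) => f (a.1 + b.1) with hM
    have hrow : ∀ a : A, M a = resB (g a.1) := by
      intro a
      funext b
      simp only [hM, hres, Matrix.of_apply, LinearMap.funLeft_apply, hg]
      rw [add_comm]
    set W' : Submodule ℂ (B → ℂ) := Submodule.span ℂ (Set.range M) with hW'
    have h1 : W' ≤ Submodule.map resB V := by
      rw [hW', Submodule.span_le]
      rintro _ ⟨a, rfl⟩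
      rw [hrow]
      exact Submodule.mem_map_of_mem (Submodule.subset_span ⟨a.1, rfl⟩)
    have : M.rank = finrank ℂ W' := Matrix.rank_eq_finrank_span_row M
    rw [this]
    calc ((finrank ℂ W' : ℕ) : ℕ∞)
        = Cardinal.toENat ((finrank ℂ W' : ℕ) : Cardinal) := (Cardinal.toENat_nat _).symm
      _ = Cardinal.toENat (Module.rank ℂ W') := by rw [finrank_eq_rank]
      _ ≤ Cardinal.toENat (Module.rank ℂ V) :=
          Cardinal.enat_gc.monotone_u ((Submodule.rank_mono h1).trans (rank_map_le _ _))
  · -- lower bound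
    have key : ∀ n : ℕ, (n : ℕ∞) ≤ Cardinal.toENat (Module.rank ℂ V) → (n : ℕ∞) ≤ L := by
      intro n hn
      rw [Cardinal.natCast_le_toENat_iff] at hn
      -- get n linearly independent elements of V
      haveI : Module.Free ℂ ↥V := Module.Free.of_divisionRing ℂ ↥V
      obtain ⟨t, htcard, htli⟩ := le_rank_iff_exists_linearIndependent_finset.mp hn
      -- each lies in a span of finitely many translates
      have hmem : ∀ w : ↥V, ∃ T : Finset (X → ℂ), ↑T ⊆ Set.range g ∧
          (w : X → ℂ) ∈ Submodule.span ℂ (T : Set (X → ℂ)) :=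
        fun w => Submodule.mem_span_finite_of_mem_span w.2
      choose T hTsub hTmem using hmem
      set Tall : Finset (X → ℂ) := t.biUnion (fun w => T w) with hTall
      have hTallsub : (Tall : Set (X → ℂ)) ⊆ Set.range g := by
        intro x hx
        simp only [hTall, Finset.coe_biUnion, Set.mem_iUnion] at hx
        obtain ⟨w, _, hw⟩ := hx
        exact hTsub w hw
      -- choose preimages under g
      have hpre : ∀ x ∈ Tall, ∃ α : X, g α = x := fun x hx => hTallsub hx
      set A : Finset X := Tall.attach.image (fun x => Classical.choose (hpre x.1 x.2)) with hA
      have hTA : (Tall : Set (X → ℂ)) ⊆ g '' (A : Set X) := by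
        intro x hx
        refine ⟨Classical.choose (hpre x hx), ?_, Classical.choose_spec (hpre x hx)⟩
        simp only [hA, Finset.coe_image, Set.mem_image]
        exact ⟨⟨x, hx⟩, by simp, rfl⟩
      set W : Submodule ℂ (X → ℂ) := Submodule.span ℂ (g '' (A : Set X)) with hW
      have hWfin : Module.Finite ℂ W :=
        Module.Finite.span_of_finite ℂ ((A.finite_toSet).image g)
      -- every element of t lies in W
      have htW : ∀ w ∈ t, (w : X → ℂ) ∈ W := by
        intro w hw
        refine Submodule.span_mono hTA ?_
        refine Submodule.span_mono ?_ (hTmem w)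
        intro x hx
        simp only [hTall, Finset.coe_biUnion, Set.mem_iUnion]
        exact ⟨w, by simpa using hw, hx⟩
      -- n ≤ finrank W
      have hli' : LinearIndependent ℂ (fun w : (t : Set ↥V) => ((w : ↥V) : X → ℂ)) :=
        htli.map' V.subtype (Submodule.ker_subtype V)
      have hliW : LinearIndependent ℂ
          (fun w : (t : Set ↥V) => (⟨((w : ↥V) : X → ℂ), htW w.1 (w.2)⟩ : ↥W)) := by
        apply LinearIndependent.of_comp W.subtype
        exact hli'
      have hnW : n ≤ finrank ℂ W := by
        have := hliW.fintype_card_le_finrank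
        simpa [htcard] using this
      -- choose separating finset B
      obtain ⟨B, hB⟩ := exists_finset_separating W
      -- the Hankel matrix for A, B
      set resB : (X → ℂ) →ₗ[ℂ] (B → ℂ) :=
        LinearMap.funLeft ℂ ℂ (fun b : B => (b : X)) with hres
      set M : Matrix A B ℂ := Matrix.of fun (a : A) (b : B) => f (a.1 + b.1) with hM
      have hrow : M = fun a : A => resB (g a.1) := by
        funext a b
        simp only [hM, hres, Matrix.of_apply, LinearMap.funLeft_apply, hg]
        rw [add_comm]
      have hrange : Set.range M = resB '' (g '' (A : Set X)) := by
        rw [hrow]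
        ext y
        constructor
        · rintro ⟨a, rfl⟩
          exact ⟨g a.1, ⟨a.1, a.2, rfl⟩, rfl⟩
        · rintro ⟨-, ⟨α, hα, rfl⟩, rfl⟩
          exact ⟨⟨α, hα⟩, rfl⟩
      -- rank M = finrank W
      have hinj : Function.Injective (resB.comp W.subtype) := by
        rw [← LinearMap.ker_eq_bot]
        rw [Submodule.eq_bot_iff]
        rintro ⟨w, hwW⟩ hker
        have hvan : ∀ b ∈ B, w b = 0 := by
          intro b hb
          have : resB w = 0 := by simpa using hker
          have := congrFun this ⟨b, hb⟩
          simpa [hres] using this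
        exact Subtype.ext (hB w hwW hvan)
      have hspan : Submodule.span ℂ (resB '' (g '' (A : Set X))) =
          LinearMap.range (resB.comp W.subtype) := by
        rw [hW, Submodule.span_image, LinearMap.range_comp, Submodule.range_subtype]
      have hrank : M.rank = finrank ℂ W := by
        rw [Matrix.rank_eq_finrank_span_row]
        change finrank ℂ (Submodule.span ℂ (Set.range M)) = _
        rw [hrange, hspan,
          LinearMap.finrank_range_of_inj hinj]
      have hnM : (n : ℕ∞) ≤ (M.rank : ℕ∞) := by
        exact_mod_cast hrank ▸ hnW
      refine hnM.trans ?_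
      rw [hL]
      exact le_iSup_of_le A (le_iSup_of_le B le_rfl)
    rcases eq_or_ne (Cardinal.toENat (Module.rank ℂ V)) ⊤ with htop | hfin
    · rw [htop]
      have hall : ∀ n : ℕ, (n : ℕ∞) ≤ L := fun n => key n (by rw [htop]; exact le_top)
      rcases eq_or_ne L ⊤ with hLtop | hLne
      · rw [hLtop]
      · lift L to ℕ using hLne with m hm
        have h1 := hall (m + 1)
        have h2 : (m + 1 : ℕ) ≤ m := by exact_mod_cast h1
        omega
    · obtain ⟨m, hm⟩ : ∃ m : ℕ, Cardinal.toENat (Module.rank ℂ ↥V) = m := by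
        cases h : Cardinal.toENat (Module.rank ℂ ↥V) with
        | top => exact absurd h hfin
        | coe m => exact ⟨m, rfl⟩
      rw [hm]
      exact key m (le_of_eq hm.symm)
end

section
/- Let Ω ⊂ ℂ^s be finite with the points e^ω = (e^{ω_1},…,e^{ω_s}) pairwise distinct, and let f(α) = ∑_{ω∈Ω} f_ω e^{ω·α} with all f_ω ∈ ℂ∖{0}. Then rank H(f) = #Ω, i.e., every Hankel matrix H_{A,B}(f) has rank at most #Ω, and there exist finite A, B ⊂ ℕ_0^s with rank H_{A,B}(f) = #Ω. -/
open Finset Module Matrix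

/-- Finite witness for linear independence of functions. -/
lemma exists_finset_restrict_li {F : Type*} [Field F] {ι X : Type*} [Fintype ι]
    (v : ι → X → F) (hv : LinearIndependent F v) :
    ∃ S : Finset X, LinearIndependent F (fun i => (fun x : S => v i x)) := by
  classical
  set L : X → ((ι → F) →ₗ[F] F) := fun x =>
    { toFun := fun c => ∑ i, c i * v i x
      map_add' := by intro a b; simp [add_mul, Finset.sum_add_distrib]
      map_smul' := by intro m a; simp [Finset.mul_sum, mul_assoc] } with hL
  set K : Finset X → Submodule F (ι → F) := fun S => ⨅ x ∈ S, LinearMap.ker (L x) with hK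
  have hmem : ∀ (S : Finset X) (c : ι → F),
      c ∈ K S ↔ ∀ x ∈ S, ∑ i, c i * v i x = 0 := by
    intro S c
    simp [hK, Submodule.mem_iInf, LinearMap.mem_ker, hL]
  set d := sInf {n | ∃ S : Finset X, finrank F (K S) = n} with hd
  obtain ⟨S, hS⟩ : ∃ S : Finset X, finrank F (K S) = d :=
    Nat.sInf_mem (⟨finrank F (K (∅ : Finset X)), ⟨∅, rfl⟩⟩ :
      {n | ∃ S : Finset X, finrank F (K S) = n}.Nonempty)
  have hbot : K S = ⊥ := by
    rw [Submodule.eq_bot_iff]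
    by_contra hc
    push_neg at hc
    obtain ⟨c, hcS, hc0⟩ := hc
    have hsum : (∑ i, c i • v i) ≠ 0 := by
      intro h
      exact hc0 (funext fun i => Fintype.linearIndependent_iff.mp hv c h i)
    obtain ⟨x, hx⟩ : ∃ x, (∑ i, c i • v i) x ≠ 0 := by
      by_contra h; push_neg at h; exact hsum (funext h)
    have hx' : ∑ i, c i * v i x ≠ 0 := by
      simpa [Finset.sum_apply] using hx
    have hlt : K (insert x S) < K S := by
      refine lt_of_le_of_ne ?_ ?_
      · intro y hy
        rw [hmem] at hy ⊢
        exact fun z hz => hy z (Finset.mem_insert_of_mem hz)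
      · intro h
        have : c ∈ K (insert x S) := h ▸ hcS
        exact hx' ((hmem _ c).mp this x (Finset.mem_insert_self x S))
    have : finrank F (K (insert x S)) < d :=
      hS ▸ Submodule.finrank_lt_finrank_of_lt hlt
    have hmemset : finrank F (K (insert x S)) ∈ {n | ∃ S : Finset X, finrank F (K S) = n} :=
      ⟨insert x S, rfl⟩
    exact absurd (Nat.sInf_le hmemset) (by omega)
  refine ⟨S, Fintype.linearIndependent_iff.mpr fun c hc i => ?_⟩
  have : c ∈ K S := by
    rw [hmem]
    intro x hx
    have := congrFun hc ⟨x, hx⟩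
    simpa [Finset.sum_apply] using this
  rw [hbot, Submodule.mem_bot] at this
  simp [this]

/-- The multiplicative character on `Fin s → ℕ` attached to a point `θ : Fin s → ℂ`. -/
noncomputable def powChar (s : ℕ) (θ : Fin s → ℂ) :
    Multiplicative (Fin s → ℕ) →* ℂ where
  toFun a := ∏ j, θ j ^ (Multiplicative.toAdd a j)
  map_one' := by simp
  map_mul' a b := by
    simp [pow_add, Finset.prod_mul_distrib]

lemma exists_good_A (s : ℕ) (Ω : Finset (Fin s → ℂ))
    (hdist : Set.InjOn (fun ω : Fin s → ℂ => fun j => Complex.exp (ω j)) Ω) :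
    ∃ S : Finset (Fin s → ℕ),
      LinearIndependent ℂ
        (fun ω : Ω => fun a : S => ∏ j, Complex.exp (ω.1 j) ^ (a.1 j)) := by
  classical
  have hsingle : ∀ (θ : Fin s → ℂ) (j : Fin s),
      ∏ k, θ k ^ ((Pi.single j 1 : Fin s → ℕ) k) = θ j := by
    intro θ j
    rw [Finset.prod_eq_single j]
    · simp
    · intro k _ hk; simp [Pi.single_apply, hk]
    · simp
  have hinj : Function.Injective
      (fun ω : Ω => powChar s (fun j => Complex.exp (ω.1 j))) := by
    intro ω₁ ω₂ h
    apply Subtype.ext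
    apply hdist ω₁.2 ω₂.2
    funext j
    have h2 := congrArg (fun χ : Multiplicative (Fin s → ℕ) →* ℂ =>
      χ (Multiplicative.ofAdd (Pi.single j 1))) h
    simpa [powChar, hsingle] using h2
  have hli0 : LinearIndependent ℂ
      (fun ω : Ω => ⇑(powChar s (fun j => Complex.exp (ω.1 j)))) :=
    (linearIndependent_monoidHom (Multiplicative (Fin s → ℕ)) ℂ).comp _ hinj
  obtain ⟨S, hS⟩ := exists_finset_restrict_li
    (fun ω : Ω => ⇑(powChar s (fun j => Complex.exp (ω.1 j)))) hli0
  exact ⟨S, hS⟩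

open Finset in
/-- for a simple exponential sum with nonzero coefficients and
distinct frequencies, `rank H(f) = #Ω`. -/
theorem hankel_rank_simple_exponential (s : ℕ) (Ω : Finset (Fin s → ℂ))
    (hdist : Set.InjOn (fun ω : Fin s → ℂ => fun j => Complex.exp (ω j)) Ω)
    (fc : (Fin s → ℂ) → ℂ) (hfc : ∀ ω ∈ Ω, fc ω ≠ 0)
    (f : (Fin s → ℤ) → ℂ)
    (hf : ∀ α : Fin s → ℤ, f α = ∑ ω ∈ Ω, fc ω * ∏ j, Complex.exp (ω j) ^ (α j)) :
    (∀ A B : Finset (Fin s → ℤ),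
        Matrix.rank (Matrix.of fun (a : A) (b : B) => f (a.1 + b.1)) ≤ Ω.card) ∧
    (∃ A B : Finset (Fin s → ℕ),
        Matrix.rank
            (Matrix.of fun (a : A) (b : B) =>
              f fun j => (a.1 j : ℤ) + (b.1 j : ℤ)) = Ω.card) := by
  classical
  constructor
  · intro A B
    set L : Matrix A Ω ℂ :=
      Matrix.of fun a ω => fc ω.1 * ∏ j, Complex.exp (ω.1 j) ^ (a.1 j) with hLdef
    set R : Matrix Ω B ℂ :=
      Matrix.of fun ω b => ∏ j, Complex.exp (ω.1 j) ^ (b.1 j) with hRdef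
    have hfac : (Matrix.of fun (a : A) (b : B) => f (a.1 + b.1)) = L * R := by
      ext a b
      rw [Matrix.of_apply, Matrix.mul_apply, hf, ← Finset.sum_coe_sort Ω]
      refine Finset.sum_congr rfl fun ω _ => ?_
      have hsplit : ∏ j, Complex.exp (ω.1 j) ^ ((a.1 + b.1) j)
          = (∏ j, Complex.exp (ω.1 j) ^ (a.1 j)) *
            ∏ j, Complex.exp (ω.1 j) ^ (b.1 j) := by
        rw [← Finset.prod_mul_distrib]
        refine Finset.prod_congr rfl fun j _ => ?_
        rw [Pi.add_apply, zpow_add₀ (Complex.exp_ne_zero _)]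
      rw [hsplit, hLdef, hRdef]
      simp only [Matrix.of_apply]
      ring
    rw [hfac]
    calc (L * R).rank ≤ R.rank := Matrix.rank_mul_le_right L R
      _ ≤ Fintype.card Ω := R.rank_le_card_height
      _ = Ω.card := Fintype.card_coe Ω
  · obtain ⟨S, hli⟩ := exists_good_A s Ω hdist
    refine ⟨S, S, ?_⟩
    set W : Matrix Ω S ℂ :=
      Matrix.of fun ω a => ∏ j, Complex.exp (ω.1 j) ^ (a.1 j) with hW
    set D : Matrix Ω Ω ℂ := Matrix.diagonal (fun ω => fc ω.1) with hD
    have hfac : (Matrix.of fun (a : S) (b : S) =>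
        f fun j => (a.1 j : ℤ) + (b.1 j : ℤ)) = Wᵀ * (D * W) := by
      ext a b
      rw [Matrix.of_apply, Matrix.mul_apply, hf, ← Finset.sum_coe_sort Ω]
      refine Finset.sum_congr rfl fun ω _ => ?_
      have hsplit : ∏ j, Complex.exp (ω.1 j) ^ ((a.1 j : ℤ) + (b.1 j : ℤ))
          = (∏ j, Complex.exp (ω.1 j) ^ (a.1 j)) *
            ∏ j, Complex.exp (ω.1 j) ^ (b.1 j) := by
        rw [← Finset.prod_mul_distrib]
        refine Finset.prod_congr rfl fun j _ => ?_
        rw [zpow_add₀ (Complex.exp_ne_zero _), zpow_natCast, zpow_natCast]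
      rw [hsplit]
      simp only [Matrix.transpose_apply, hD, Matrix.diagonal_mul, hW, Matrix.of_apply]
      ring
    have hWT : Function.Injective Wᵀ.mulVecLin := by
      rw [← LinearMap.ker_eq_bot, Submodule.eq_bot_iff]
      intro y hy
      rw [LinearMap.mem_ker] at hy
      have h0 : ∀ a : S, ∑ ω : Ω, y ω * W ω a = 0 := by
        intro a
        have h1 := congrFun hy a
        simpa [Matrix.mulVecLin_apply, Matrix.mulVec, Matrix.vecMul, dotProduct,
          Matrix.transpose_apply, mul_comm] using h1
      have h2 := Fintype.linearIndependent_iff.mp hli y ?_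
      · funext ω; exact h2 ω
      · funext a
        have := h0 a
        simpa [Finset.sum_apply, smul_eq_mul, hW, mul_comm] using this
    have hWsurj : Function.Surjective W.mulVecLin := by
      rw [← LinearMap.range_eq_top]
      apply Submodule.eq_top_of_finrank_eq
      have h1 : Module.finrank ℂ (LinearMap.range W.mulVecLin) = W.rank := rfl
      rw [h1, ← Matrix.rank_transpose]
      show Module.finrank ℂ (LinearMap.range Wᵀ.mulVecLin) = _
      rw [LinearMap.finrank_range_of_inj hWT]
    have hDsurj : Function.Surjective D.mulVecLin := by
      intro z
      refine ⟨fun ω => (fc ω.1)⁻¹ * z ω, ?_⟩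
      funext ω
      rw [Matrix.mulVecLin_apply, hD, Matrix.mulVec_diagonal, ← mul_assoc,
        mul_inv_cancel₀ (hfc ω.1 ω.2), one_mul]
    have hDW : Function.Surjective (D * W).mulVecLin := by
      intro z
      obtain ⟨y, hy⟩ := hDsurj z
      obtain ⟨x, hx⟩ := hWsurj y
      refine ⟨x, ?_⟩
      rw [Matrix.mulVecLin_mul, LinearMap.comp_apply, hx, hy]
    rw [hfac]
    show Module.finrank ℂ (LinearMap.range (Wᵀ * (D * W)).mulVecLin) = Ω.card
    rw [Matrix.mulVecLin_mul,
      LinearMap.range_comp_of_range_eq_top _ (LinearMap.range_eq_top.mpr hDW),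
      LinearMap.finrank_range_of_inj hWT, Module.finrank_fintype_fun_eq_card,
      Fintype.card_coe]
end

section
/- If f : ℤ^s → ℂ has finite Hankel rank, i.e., n := rank H(f) < ∞, then rank H_{Γ_k, Γ_k}(f) = n for all k ≥ n, where Γ_k = {α ∈ ℕ_0^s : |α| ≤ k}; equivalently, the ranks of the square Hankel matrices indexed by total-degree simplices stabilize at rank H(f) once k reaches the rank. -/
open Submodule Module Matrix

namespace HankelAux

variable {s : ℕ}

/-- translate of `f` by `β` -/
def g (f : (Fin s → ℤ) → ℂ) (β : Fin s → ℤ) : (Fin s → ℤ) → ℂ :=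
  fun α => f (α + β)

/-- shift operator as a linear equivalence -/
noncomputable def T (t : Fin s → ℤ) :
    ((Fin s → ℤ) → ℂ) ≃ₗ[ℂ] ((Fin s → ℤ) → ℂ) :=
  LinearEquiv.funCongrLeft ℂ ℂ (Equiv.addRight t)

lemma T_apply (t : Fin s → ℤ) (h : (Fin s → ℤ) → ℂ) (α : Fin s → ℤ) :
    T t h α = h (α + t) := rfl

lemma T_g (f : (Fin s → ℤ) → ℂ) (t β : Fin s → ℤ) :
    T t (g f β) = g f (β + t) := by
  funext α
  simp only [T_apply, g]
  rw [add_right_comm, add_assoc]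

lemma T_comp (t t' : Fin s → ℤ) :
    (T (s := s) t).toLinearMap ∘ₗ (T t').toLinearMap = (T (t + t')).toLinearMap := by
  ext h α
  simp only [LinearMap.comp_apply, LinearEquiv.coe_coe, T_apply, LinearMap.pi_apply]
  rw [add_assoc]

lemma T_zero_map : (T (s := s) 0).toLinearMap = LinearMap.id := by
  ext h α
  simp [T_apply]

/-- restriction to a finite set -/
noncomputable def res (A : Finset (Fin s → ℤ)) :
    ((Fin s → ℤ) → ℂ) →ₗ[ℂ] (A → ℂ) :=
  LinearMap.funLeft ℂ ℂ (fun a : A => (a : Fin s → ℤ))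

/-- the Hankel matrix -/
def M (f : (Fin s → ℤ) → ℂ) (A B : Finset (Fin s → ℤ)) : Matrix A B ℂ :=
  Matrix.of fun (a : A) (b : B) => f (a.1 + b.1)

lemma rank_eq (f : (Fin s → ℤ) → ℂ) (A B : Finset (Fin s → ℤ)) :
    (M f A B).rank = finrank ℂ (Submodule.map (res A) (span ℂ (g f '' ↑B))) := by
  have hset : Set.range (M f A B)ᵀ = (res A) '' (g f '' ↑B) := by
    have h1 : (M f A B)ᵀ = ((res A) ∘ (g f)) ∘ (Subtype.val : ↥B → _) := rfl
    rw [h1, Set.range_comp, Subtype.range_coe, Set.image_comp]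
  rw [Matrix.rank_eq_finrank_span_cols, show (M f A B).col = (M f A B)ᵀ from rfl, hset, Submodule.map_span]


lemma rank_le_of_span_le (f : (Fin s → ℤ) → ℂ) (A B C : Finset (Fin s → ℤ))
    (h : ∀ b ∈ B, g f b ∈ span ℂ (g f '' ↑C)) :
    (M f A B).rank ≤ (M f A C).rank := by
  rw [rank_eq, rank_eq]
  have hC : FiniteDimensional ℂ (span ℂ (g f '' (↑C : Set (Fin s → ℤ)))) :=
    FiniteDimensional.span_of_finite ℂ (C.finite_toSet.image _)
  have hfd : Module.Finite ℂ
      (Submodule.map (res A) (span ℂ (g f '' (↑C : Set (Fin s → ℤ))))) :=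
    Module.Finite.map _ _
  apply Submodule.finrank_mono
  apply Submodule.map_mono
  rw [Submodule.span_le]
  rintro _ ⟨b, hb, rfl⟩
  exact h b hb

lemma exists_finset_ker_bot (W : Submodule ℂ ((Fin s → ℤ) → ℂ)) [FiniteDimensional ℂ W] :
    ∃ A : Finset (Fin s → ℤ), ∀ w ∈ W, (∀ a ∈ A, w a = 0) → w = 0 := by
  classical
  set K : Finset (Fin s → ℤ) → Submodule ℂ W :=
    fun A => LinearMap.ker ((res A).comp W.subtype) with hK
  have hmem : ∀ (A : Finset (Fin s → ℤ)) (w : W), w ∈ K A ↔ ∀ a ∈ A, (w : (Fin s → ℤ) → ℂ) a = 0 := by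
    intro A w
    simp only [hK, LinearMap.mem_ker, LinearMap.comp_apply, Submodule.coe_subtype]
    constructor
    · intro h a ha
      exact congr_fun h ⟨a, ha⟩
    · intro h
      funext a
      exact h a.1 a.2
  suffices H : ∃ A, K A = ⊥ by
    obtain ⟨A, hA⟩ := H
    refine ⟨A, fun w hw h0 => ?_⟩
    have : (⟨w, hw⟩ : W) ∈ K A := (hmem A _).mpr h0
    rw [hA, Submodule.mem_bot] at this
    exact congr_arg Subtype.val this
  suffices H : ∀ d (A : Finset (Fin s → ℤ)), finrank ℂ (K A) ≤ d → ∃ A', K A' = ⊥ by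
    exact H (finrank ℂ (K ∅)) ∅ le_rfl
  intro d
  induction d with
  | zero =>
    intro A hA
    exact ⟨A, Submodule.finrank_eq_zero.mp (Nat.le_zero.mp hA)⟩
  | succ d ih =>
    intro A hA
    by_cases hbot : K A = ⊥
    · exact ⟨A, hbot⟩
    · obtain ⟨w, hwK, hw0⟩ := Submodule.exists_mem_ne_zero_of_ne_bot hbot
      have hw0' : (w : (Fin s → ℤ) → ℂ) ≠ 0 := fun h => hw0 (Subtype.ext h)
      obtain ⟨x, hx⟩ : ∃ x, (w : (Fin s → ℤ) → ℂ) x ≠ 0 := by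
        by_contra hc
        push_neg at hc
        exact hw0' (funext hc)
      have hlt : K (insert x A) < K A := by
        refine lt_of_le_of_ne ?_ ?_
        · intro v hv
          rw [hmem] at hv ⊢
          exact fun a ha => hv a (Finset.mem_insert_of_mem ha)
        · intro he
          rw [← he, hmem] at hwK
          exact hx (hwK x (Finset.mem_insert_self x A))
      have : finrank ℂ (K (insert x A)) < finrank ℂ (K A) :=
        Submodule.finrank_lt_finrank_of_lt hlt
      exact ih (insert x A) (by omega)

lemma span_finrank_le (f : (Fin s → ℤ) → ℂ) (n : ℕ)
    (hb : ∀ A B : Finset (Fin s → ℤ), (M f A B).rank ≤ n) (S : Finset (Fin s → ℤ)) :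
    finrank ℂ (span ℂ (g f '' (↑S : Set (Fin s → ℤ)))) ≤ n := by
  set W := span ℂ (g f '' (↑S : Set (Fin s → ℤ))) with hW
  have hfd : FiniteDimensional ℂ W :=
    FiniteDimensional.span_of_finite ℂ (S.finite_toSet.image _)
  obtain ⟨A, hA⟩ := exists_finset_ker_bot W
  have hinj : Function.Injective ((res A).comp W.subtype) := by
    rw [← LinearMap.ker_eq_bot, Submodule.eq_bot_iff]
    intro w hw
    rw [LinearMap.mem_ker, LinearMap.comp_apply] at hw
    refine Subtype.ext (hA w.1 w.2 fun a ha => ?_)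
    exact congr_fun hw ⟨a, ha⟩
  calc finrank ℂ W = finrank ℂ (LinearMap.range ((res A).comp W.subtype)) :=
        (LinearMap.finrank_range_of_inj hinj).symm
    _ = finrank ℂ (Submodule.map (res A) W) := by
        rw [LinearMap.range_comp, Submodule.range_subtype]
    _ = (M f A S).rank := (rank_eq f A S).symm
    _ ≤ n := hb A S


/-- the total-degree simplex -/
def Gam (s k : ℕ) : Set (Fin s → ℤ) :=
  {α | (∀ j, 0 ≤ α j) ∧ (∑ j, α j) ≤ (k : ℤ)}

lemma Gam_finite (k : ℕ) : (Gam s k).Finite := by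
  apply Set.Finite.subset (Set.Finite.pi fun _ : Fin s => Set.finite_Icc (0 : ℤ) k)
  intro α hα
  rw [Set.mem_pi]
  intro j _
  refine Set.mem_Icc.mpr ⟨hα.1 j, ?_⟩
  calc α j ≤ ∑ i, α i := Finset.single_le_sum (fun i _ => hα.1 i) (Finset.mem_univ j)
    _ ≤ (k : ℤ) := hα.2

lemma Gam_mono {k m : ℕ} (h : k ≤ m) : Gam s k ⊆ Gam s m := by
  intro α hα
  exact ⟨hα.1, hα.2.trans (by exact_mod_cast Int.ofNat_le.mpr h)⟩

/-- the span of translates over the simplex -/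
noncomputable def Wk (f : (Fin s → ℤ) → ℂ) (k : ℕ) : Submodule ℂ ((Fin s → ℤ) → ℂ) :=
  span ℂ (g f '' Gam s k)

instance Wk_fd (f : (Fin s → ℤ) → ℂ) (k : ℕ) : FiniteDimensional ℂ (Wk f k) :=
  FiniteDimensional.span_of_finite ℂ ((Gam_finite k).image _)

lemma Wk_mono (f : (Fin s → ℤ) → ℂ) {k m : ℕ} (h : k ≤ m) : Wk f k ≤ Wk f m :=
  Submodule.span_mono (Set.image_mono (Gam_mono h))

lemma single_mem_Gam_step {k : ℕ} {γ : Fin s → ℤ} (hγ : γ ∈ Gam s k) (j : Fin s) :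
    γ + Pi.single j 1 ∈ Gam s (k + 1) := by
  classical
  constructor
  · intro i
    have h1 : (0:ℤ) ≤ (Pi.single j 1 : Fin s → ℤ) i := by
      rcases eq_or_ne i j with rfl | hij
      · simp
      · rw [Pi.single_eq_of_ne hij]
    have := hγ.1 i
    exact add_nonneg this h1
  · have hsum : ∑ i, (γ + (Pi.single j 1 : Fin s → ℤ)) i = (∑ i, γ i) + 1 := by
      have : ∀ i, (γ + (Pi.single j 1 : Fin s → ℤ)) i
          = γ i + (Pi.single j 1 : Fin s → ℤ) i := fun i => rfl
      simp only [this]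
      rw [Finset.sum_add_distrib, Finset.sum_pi_single']
      simp
    rw [hsum]
    push_cast
    exact add_le_add_left hγ.2 1

lemma map_T_single_le (f : (Fin s → ℤ) → ℂ) (k : ℕ) (j : Fin s) :
    Submodule.map (T (Pi.single j 1)).toLinearMap (Wk f k) ≤ Wk f (k + 1) := by
  rw [Wk, Submodule.map_span, Submodule.span_le]
  rintro _ ⟨_, ⟨γ, hγ, rfl⟩, rfl⟩
  refine Submodule.subset_span ⟨γ + Pi.single j 1, single_mem_Gam_step hγ j, ?_⟩
  exact (T_g f _ γ).symm

lemma Wk_step (f : (Fin s → ℤ) → ℂ) (k : ℕ) (h : Wk f (k + 1) ≤ Wk f k) :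
    Wk f (k + 2) ≤ Wk f (k + 1) := by
  rw [Wk, Submodule.span_le]
  rintro _ ⟨β, hβ, rfl⟩
  by_cases hβ' : β ∈ Gam s (k + 1)
  · exact Submodule.subset_span ⟨β, hβ', rfl⟩
  · have hpos : ∃ j, 1 ≤ β j := by
      by_contra hc
      push_neg at hc
      refine hβ' ⟨hβ.1, ?_⟩
      have : ∑ j, β j ≤ 0 := Finset.sum_nonpos fun j _ => by
        have := hc j; omega
      have h0 : (0:ℤ) ≤ (k:ℤ) + 1 := by positivity
      push_cast
      omega
    obtain ⟨j, hj⟩ := hpos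
    classical
    set β' : Fin s → ℤ := β - Pi.single j 1 with hβ'def
    have hβ'mem : β' ∈ Gam s (k + 1) := by
      constructor
      · intro i
        rcases eq_or_ne i j with rfl | hij
        · simp only [hβ'def, Pi.sub_apply, Pi.single_eq_same]
          omega
        · simp only [hβ'def, Pi.sub_apply, Pi.single_eq_of_ne hij]
          have := hβ.1 i
          omega
      · have hsum : ∑ i, β' i = (∑ i, β i) - 1 := by
          simp only [hβ'def, Pi.sub_apply]
          rw [Finset.sum_sub_distrib, Finset.sum_pi_single']
          simp
        rw [hsum]
        have := hβ.2
        push_cast at this ⊢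
        omega
    have hrw : g f β = T (Pi.single j 1) (g f β') := by
      rw [T_g]
      simp [hβ'def]
    rw [hrw]
    have h1 : g f β' ∈ Wk f k := h (Submodule.subset_span ⟨β', hβ'mem, rfl⟩)
    exact map_T_single_le f k j ⟨g f β', h1, rfl⟩

lemma Wk_stab (f : (Fin s → ℤ) → ℂ) (k : ℕ) (h : Wk f (k + 1) ≤ Wk f k) :
    ∀ m, k ≤ m → Wk f m = Wk f k := by
  have aux : ∀ m, Wk f (k + m + 1) ≤ Wk f (k + m) := by
    intro m
    induction m with
    | zero => simpa using h
    | succ m ih =>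
      have := Wk_step f (k + m) ih
      convert this using 2 <;> omega
  have aux2 : ∀ m, Wk f (k + m) ≤ Wk f k := by
    intro m
    induction m with
    | zero => simp
    | succ m ih => exact le_trans (by simpa [← add_assoc] using aux m) ih
  intro m hm
  obtain ⟨m', rfl⟩ := Nat.exists_eq_add_of_le hm
  exact le_antisymm (aux2 m') (Wk_mono f (Nat.le_add_right k m'))


lemma zero_mem_Gam (k : ℕ) : (0 : Fin s → ℤ) ∈ Gam s k := by
  constructor
  · intro j; simp
  · simp

lemma g_zero (f : (Fin s → ℤ) → ℂ) : g f 0 = f := by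
  funext α; simp [g]

/-- existence of a stabilization point below `n` -/
lemma exists_stab (f : (Fin s → ℤ) → ℂ) (n : ℕ)
    (hb : ∀ A B : Finset (Fin s → ℤ), (M f A B).rank ≤ n) (hf : f ≠ 0) :
    ∃ j, j < n ∧ Wk f (j + 1) ≤ Wk f j := by
  classical
  have hle : ∀ k, finrank ℂ (Wk f k) ≤ n := by
    intro k
    have := span_finrank_le f n hb (Gam_finite (s := s) k).toFinset
    rw [Set.Finite.coe_toFinset] at this
    exact this
  have h0 : 1 ≤ finrank ℂ (Wk f 0) := by
    by_contra hc
    push_neg at hc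
    have : finrank ℂ (Wk f 0) = 0 := by omega
    have hbot : Wk f 0 = ⊥ := Submodule.finrank_eq_zero.mp this
    have hmem : f ∈ Wk f 0 :=
      Submodule.subset_span ⟨0, zero_mem_Gam 0, g_zero f⟩
    rw [hbot, Submodule.mem_bot] at hmem
    exact hf hmem
  by_contra hc
  push_neg at hc
  have hstrict : ∀ j, j < n → finrank ℂ (Wk f j) < finrank ℂ (Wk f (j + 1)) := by
    intro j hj
    have hlt : Wk f j < Wk f (j + 1) := by
      refine lt_of_le_of_ne (Wk_mono f (Nat.le_succ j)) fun he => ?_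
      exact hc j hj he.ge
    exact Submodule.finrank_lt_finrank_of_lt hlt
  have hgrow : ∀ j, j ≤ n → j + 1 ≤ finrank ℂ (Wk f j) := by
    intro j
    induction j with
    | zero => intro _; exact h0
    | succ j ih =>
      intro hj
      have h1 := ih (by omega)
      have h2 := hstrict j (by omega)
      omega
  have := hgrow n le_rfl
  have := hle n
  omega

/-- the stable space is invariant under all integer shifts -/
lemma map_T_stab (f : (Fin s → ℤ) → ℂ) (j : ℕ)
    (hstab : ∀ m, j ≤ m → Wk f m = Wk f j) (t : Fin s → ℤ) :
    Submodule.map (T t).toLinearMap (Wk f j) = Wk f j := by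
  classical
  have hzero : Submodule.map (T (0 : Fin s → ℤ)).toLinearMap (Wk f j) = Wk f j := by
    rw [T_zero_map, Submodule.map_id]
  have hadd : ∀ a b : Fin s → ℤ,
      Submodule.map (T a).toLinearMap (Wk f j) = Wk f j →
      Submodule.map (T b).toLinearMap (Wk f j) = Wk f j →
      Submodule.map (T (a + b)).toLinearMap (Wk f j) = Wk f j := by
    intro a b ha hb
    calc Submodule.map (T (a + b)).toLinearMap (Wk f j)
        = Submodule.map ((T a).toLinearMap ∘ₗ (T b).toLinearMap) (Wk f j) := by
          rw [T_comp]
      _ = Submodule.map (T a).toLinearMap (Submodule.map (T b).toLinearMap (Wk f j)) :=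
          Submodule.map_comp _ _ _
      _ = Wk f j := by rw [hb, ha]
  have hneg : ∀ a : Fin s → ℤ,
      Submodule.map (T a).toLinearMap (Wk f j) = Wk f j →
      Submodule.map (T (-a)).toLinearMap (Wk f j) = Wk f j := by
    intro a ha
    calc Submodule.map (T (-a)).toLinearMap (Wk f j)
        = Submodule.map (T (-a)).toLinearMap (Submodule.map (T a).toLinearMap (Wk f j)) := by
          rw [ha]
      _ = Submodule.map ((T (-a)).toLinearMap ∘ₗ (T a).toLinearMap) (Wk f j) :=
          (Submodule.map_comp _ _ _).symm
      _ = Wk f j := by rw [T_comp, neg_add_cancel, T_zero_map, Submodule.map_id]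
  have hsingle : ∀ i : Fin s,
      Submodule.map (T ((Pi.single i 1 : Fin s → ℤ))).toLinearMap (Wk f j) = Wk f j := by
    intro i
    have hle : Submodule.map (T ((Pi.single i 1 : Fin s → ℤ))).toLinearMap (Wk f j)
        ≤ Wk f j := by
      have h1 := map_T_single_le f j i
      rw [hstab (j + 1) (Nat.le_succ j)] at h1
      exact h1
    have heq : finrank ℂ
        (Submodule.map (T ((Pi.single i 1 : Fin s → ℤ))).toLinearMap (Wk f j))
        = finrank ℂ (Wk f j) := LinearEquiv.finrank_map_eq _ _
    exact Submodule.eq_of_le_of_finrank_le hle heq.ge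
  have hsmul : ∀ (c : ℤ) (i : Fin s),
      Submodule.map (T ((Pi.single i c : Fin s → ℤ))).toLinearMap (Wk f j) = Wk f j := by
    intro c i
    induction c using Int.induction_on with
    | zero => rw [Pi.single_zero]; exact hzero
    | succ c ih =>
      have h2 : (Pi.single i ((c : ℤ) + 1) : Fin s → ℤ)
          = Pi.single i (c : ℤ) + Pi.single i 1 := by
        rw [← Pi.single_add]
      rw [h2]
      exact hadd _ _ ih (hsingle i)
    | pred c ih =>
      have h2 : (Pi.single i (-(c : ℤ) - 1) : Fin s → ℤ)
          = Pi.single i (-(c : ℤ)) + (-(Pi.single i 1 : Fin s → ℤ)) := by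
        rw [← Pi.single_neg, ← Pi.single_add, sub_eq_add_neg]
      rw [h2]
      exact hadd _ _ ih (hneg _ (hsingle i))
  have hfin : Submodule.map (T (∑ i, (Pi.single i (t i) : Fin s → ℤ))).toLinearMap (Wk f j)
      = Wk f j := by
    apply Finset.sum_induction _
      (fun u => Submodule.map (T u).toLinearMap (Wk f j) = Wk f j) hadd hzero
    intro i _
    exact hsmul (t i) i
  rwa [Finset.univ_sum_single] at hfin

/-- main lemma: every translate lies in the span over the simplex `Γ_k`, `k ≥ n` -/
lemma mem_span_Gam (f : (Fin s → ℤ) → ℂ) (n : ℕ)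
    (hb : ∀ A B : Finset (Fin s → ℤ), (M f A B).rank ≤ n)
    (k : ℕ) (hk : n ≤ k) (β : Fin s → ℤ) :
    g f β ∈ span ℂ (g f '' Gam s k) := by
  by_cases hf : f = 0
  · subst hf
    have h0 : g (0 : (Fin s → ℤ) → ℂ) β = 0 := rfl
    rw [h0]
    exact Submodule.zero_mem _
  obtain ⟨j, hjn, hj⟩ := exists_stab f n hb hf
  have hstab := Wk_stab f j hj
  have h1 : g f 0 ∈ Wk f j :=
    Submodule.subset_span ⟨0, zero_mem_Gam j, rfl⟩
  have h2 : g f β ∈ Wk f j := by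
    rw [← map_T_stab f j hstab β]
    refine ⟨g f 0, h1, ?_⟩
    rw [LinearEquiv.coe_coe, T_g, zero_add]
  have h3 : Wk f j ≤ Wk f k := Wk_mono f (by omega)
  exact h3 h2


lemma rank_transpose_M (f : (Fin s → ℤ) → ℂ) (A B : Finset (Fin s → ℤ)) :
    (M f A B).rank = (M f B A).rank := by
  have h : (M f B A)ᵀ = M f A B := by
    ext a b
    simp only [M, Matrix.transpose_apply, Matrix.of_apply]
    rw [add_comm]
  rw [← h, Matrix.rank_transpose]

end HankelAux

open Finset in
/-- if `rank H(f) = n < ∞` then the square Hankel matrices over the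
total-degree simplices `Γ_k` have rank `n` for all `k ≥ n`. -/
theorem hankel_rank_stabilizes (s : ℕ) (f : (Fin s → ℤ) → ℂ) (n : ℕ)
    (hrank : (⨆ A : Finset (Fin s → ℤ), ⨆ B : Finset (Fin s → ℤ),
        ((Matrix.rank (Matrix.of fun (a : A) (b : B) => f (a.1 + b.1)) : ℕ∞))) = n) :
    ∀ k : ℕ, n ≤ k →
      ∀ Γ : Finset (Fin s → ℤ),
        (∀ α : Fin s → ℤ,
            α ∈ Γ ↔ (∀ j, 0 ≤ α j) ∧ (∑ j, α j) ≤ (k : ℤ)) →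
        Matrix.rank (Matrix.of fun (a : Γ) (b : Γ) => f (a.1 + b.1)) = n := by
  intro k hk Γ hΓ
  have hb : ∀ A B : Finset (Fin s → ℤ), (HankelAux.M f A B).rank ≤ n := by
    intro A B
    have h1 : ((HankelAux.M f A B).rank : ℕ∞) ≤ (n : ℕ∞) := by
      rw [← hrank]
      exact le_iSup₂ (f := fun (A B : Finset (Fin s → ℤ)) =>
        ((Matrix.rank (Matrix.of fun (a : A) (b : B) => f (a.1 + b.1)) : ℕ∞))) A B
    exact_mod_cast h1
  have hΓc : (↑Γ : Set (Fin s → ℤ)) = HankelAux.Gam s k := by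
    ext α
    rw [Finset.mem_coe, hΓ α]
    exact Iff.rfl
  apply le_antisymm
  · exact hb Γ Γ
  · have h2 : (n : ℕ∞) ≤ ((HankelAux.M f Γ Γ).rank : ℕ∞) := by
      rw [← hrank]
      apply iSup_le
      intro A
      apply iSup_le
      intro B
      have c1 : (HankelAux.M f A B).rank ≤ (HankelAux.M f A Γ).rank := by
        apply HankelAux.rank_le_of_span_le
        intro b _
        rw [hΓc]
        exact HankelAux.mem_span_Gam f n hb k hk b
      have c2 : (HankelAux.M f A Γ).rank = (HankelAux.M f Γ A).rank :=
        HankelAux.rank_transpose_M f A Γ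
      have c3 : (HankelAux.M f Γ A).rank ≤ (HankelAux.M f Γ Γ).rank := by
        apply HankelAux.rank_le_of_span_le
        intro b _
        rw [hΓc]
        exact HankelAux.mem_span_Gam f n hb k hk b
      exact_mod_cast c1.trans (c2 ▸ c3)
    exact_mod_cast h2
end

section
/- A finite dimensional subspace Q of ℂ[x_1,…,x_s] is shift invariant (closed under all translations f ↦ f(·+e_j)) if and only if its image LQ under the operator L f = ∑_α (1/α!)((τ-I)^α f)(0) x^α is D-invariant, i.e., closed under all partial derivatives ∂/∂x_j. -/
open MvPolynomial

namespace Stmt17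

variable {s : ℕ}

noncomputable def tau (s : ℕ) (j : Fin s) : Module.End ℂ (MvPolynomial (Fin s) ℂ) :=
  (MvPolynomial.aeval fun i =>
    (MvPolynomial.X i : MvPolynomial (Fin s) ℂ) + if i = j then 1 else 0).toLinearMap

noncomputable def dpow (s : ℕ) (α : Fin s →₀ ℕ) : Module.End ℂ (MvPolynomial (Fin s) ℂ) :=
  (((List.finRange s).map fun j => (tau s j - 1) ^ (α j)).prod)

noncomputable def fact (s : ℕ) (α : Fin s →₀ ℕ) : ℂ := ∏ j, (Nat.factorial (α j) : ℂ)

def deg (α : Fin s →₀ ℕ) : ℕ := ∑ j, α j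

noncomputable def Lmap (s : ℕ) (f : MvPolynomial (Fin s) ℂ) : MvPolynomial (Fin s) ℂ :=
  ∑ᶠ α : Fin s →₀ ℕ,
    (MvPolynomial.eval 0 (dpow s α f) / fact s α) • MvPolynomial.monomial α (1 : ℂ)

lemma deg_eq (α : Fin s →₀ ℕ) : (α.sum fun _ e => e) = deg α :=
  Finsupp.sum_fintype _ _ fun _ => rfl

lemma deg_add_single (α : Fin s →₀ ℕ) (j : Fin s) :
    deg (α + Finsupp.single j 1) = deg α + 1 := by
  simp only [deg, Finsupp.add_apply, Finset.sum_add_distrib]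
  congr 1
  simp [Finsupp.single_apply]

lemma fact_ne_zero (α : Fin s →₀ ℕ) : fact s α ≠ 0 := by
  simp only [fact]
  exact Finset.prod_ne_zero_iff.2 fun j _ => Nat.cast_ne_zero.2 (Nat.factorial_ne_zero _)

lemma fact_add_single (α : Fin s →₀ ℕ) (j : Fin s) :
    fact s (α + Finsupp.single j 1) = ((α j : ℂ) + 1) * fact s α := by
  simp only [fact]
  rw [← Finset.mul_prod_erase Finset.univ _ (Finset.mem_univ j),
      ← Finset.mul_prod_erase Finset.univ (fun j' => ((α j').factorial : ℂ)) (Finset.mem_univ j)]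
  have h1 : ∀ i ∈ Finset.univ.erase j,
      ((((α + Finsupp.single j 1 : Fin s →₀ ℕ)) i).factorial : ℂ) = ((α i).factorial : ℂ) := by
    intro i hi
    have hij : i ≠ j := (Finset.mem_erase.1 hi).1
    rw [Finsupp.add_apply, Finsupp.single_apply, if_neg (Ne.symm hij), add_zero]
  rw [Finset.prod_congr rfl h1]
  have h2 : ((α + Finsupp.single j 1 : Fin s →₀ ℕ)) j = α j + 1 := by simp
  rw [h2, Nat.factorial_succ]
  push_cast
  ring

lemma totalDegree_le_iff (p : MvPolynomial (Fin s) ℂ) (n : ℕ) :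
    p.totalDegree ≤ n ↔ ∀ δ ∈ p.support, deg δ ≤ n := by
  rw [MvPolynomial.totalDegree, Finset.sup_le_iff]
  exact forall₂_congr fun δ _ => by rw [deg_eq]

lemma deg_le_totalDegree {p : MvPolynomial (Fin s) ℂ} {δ : Fin s →₀ ℕ}
    (h : coeff δ p ≠ 0) : deg δ ≤ p.totalDegree := by
  rw [← deg_eq]
  exact MvPolynomial.le_totalDegree (MvPolynomial.mem_support_iff.2 h)

lemma coeff_eq_zero_of_deg {p : MvPolynomial (Fin s) ℂ} {δ : Fin s →₀ ℕ}
    (h : p.totalDegree < deg δ) : coeff δ p = 0 := by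
  by_contra hc
  exact absurd (deg_le_totalDegree hc) (not_le.2 h)

lemma tau_apply (j : Fin s) (p : MvPolynomial (Fin s) ℂ) :
    tau s j p = MvPolynomial.aeval
      (fun i => (MvPolynomial.X i : MvPolynomial (Fin s) ℂ) + if i = j then 1 else 0) p := rfl

lemma tau_monomial (j : Fin s) (β : Fin s →₀ ℕ) (c : ℂ) :
    tau s j (monomial β c) = ∑ m ∈ Finset.range (β j + 1),
      monomial (β.update j m) (c * ((β j).choose m : ℂ)) := by
  classical
  rw [tau_apply, aeval_monomial]
  rw [Finsupp.prod_fintype _ _ (fun i => pow_zero _)]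
  rw [← Finset.mul_prod_erase Finset.univ _ (Finset.mem_univ j)]
  have h1 : ∀ i ∈ Finset.univ.erase j,
      ((X i : MvPolynomial (Fin s) ℂ) + if i = j then 1 else 0) ^ β i = X i ^ β i := by
    intro i hi
    have : i ≠ j := (Finset.mem_erase.1 hi).1
    simp [this]
  rw [Finset.prod_congr rfl h1, if_pos rfl]
  rw [(Commute.all (X j : MvPolynomial (Fin s) ℂ) 1).add_pow (β j)]
  rw [Finset.sum_mul, Finset.mul_sum]
  refine Finset.sum_congr rfl fun m hm => ?_
  rw [one_pow, mul_one]
  have : monomial (β.update j m) (c * ((β j).choose m : ℂ))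
      = C (c * ((β j).choose m : ℂ)) * ∏ i, X i ^ ((β.update j m) i) := by
    rw [monomial_eq, Finsupp.prod_fintype _ _ (fun i => pow_zero _)]
  rw [this, ← Finset.mul_prod_erase Finset.univ _ (Finset.mem_univ j)]
  have h2 : ∀ i ∈ Finset.univ.erase j,
      (X i : MvPolynomial (Fin s) ℂ) ^ ((β.update j m) i) = X i ^ β i := by
    intro i hi
    have : i ≠ j := (Finset.mem_erase.1 hi).1
    rw [Finsupp.coe_update, Function.update_of_ne this]
  rw [Finset.prod_congr rfl h2]
  have h3 : (β.update j m) j = m := by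
    rw [Finsupp.coe_update, Function.update_self]
  rw [h3]
  simp only [algebraMap_eq, map_mul, map_natCast]
  ring

lemma coeff_tau_monomial (j : Fin s) (β γ : Fin s →₀ ℕ) (c : ℂ) :
    coeff γ (tau s j (monomial β c)) =
      if β.update j (γ j) = γ ∧ γ j ≤ β j then c * ((β j).choose (γ j) : ℂ) else 0 := by
  classical
  rw [tau_monomial, coeff_sum]
  simp only [coeff_monomial]
  by_cases hle : γ j ≤ β j
  · rw [Finset.sum_eq_single (γ j)]
    · simp [hle]
    · intro m _ hm
      rw [if_neg]
      intro hupd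
      exact hm (by rw [← hupd, Finsupp.coe_update, Function.update_self])
    · intro h
      exact absurd (Finset.mem_range.2 (Nat.lt_succ_of_le hle)) h
  · rw [if_neg (fun h => hle h.2)]
    refine Finset.sum_eq_zero fun m hm => ?_
    rw [if_neg]
    intro hupd
    apply hle
    rw [← hupd, Finsupp.coe_update, Function.update_self]
    exact Nat.lt_succ_iff.1 (Finset.mem_range.1 hm)

lemma coeff_tau_sub_monomial (j : Fin s) (β γ : Fin s →₀ ℕ) (c : ℂ)
    (hdeg : deg β ≤ deg γ + 1) :
    coeff γ (tau s j (monomial β c) - monomial β c) =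
      ((γ j : ℂ) + 1) * coeff (γ + Finsupp.single j 1) (monomial β c) := by
  classical
  rw [MvPolynomial.coeff_sub, coeff_tau_monomial, coeff_monomial, coeff_monomial]
  by_cases hb : β = γ + Finsupp.single j 1
  · subst hb
    have hβj : (γ + Finsupp.single j 1 : Fin s →₀ ℕ) j = γ j + 1 := by simp
    have hupd : (γ + Finsupp.single j 1 : Fin s →₀ ℕ).update j (γ j) = γ := by
      ext i
      by_cases hij : i = j
      · subst hij; rw [Finsupp.coe_update, Function.update_self]
      · rw [Finsupp.coe_update, Function.update_of_ne hij, Finsupp.add_apply,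
          Finsupp.single_apply, if_neg (Ne.symm hij), add_zero]
    have hne : (γ + Finsupp.single j 1 : Fin s →₀ ℕ) ≠ γ := by
      intro h
      have := congrArg (fun f : Fin s →₀ ℕ => f j) h
      simp at this
    rw [if_pos ⟨hupd, by rw [hβj]; exact Nat.le_succ _⟩, if_neg hne, if_pos rfl, hβj,
      Nat.choose_succ_self_right]
    push_cast
    ring
  · rw [if_neg hb, mul_zero]
    by_cases hbg : β = γ
    · subst hbg
      rw [if_pos ⟨Finsupp.update_self _ _, le_refl _⟩, if_pos rfl, Nat.choose_self]
      ring
    · rw [if_neg hbg, sub_zero]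
      rw [if_neg]
      rintro ⟨hupd, hle⟩
      -- β agrees with γ off j, and β j ≥ γ j, β ≠ γ so β j > γ j; degree forces β j = γ j + 1
      have hoff : ∀ i, i ≠ j → β i = γ i := by
        intro i hij
        rw [← hupd, Finsupp.coe_update, Function.update_of_ne hij]
      have hjne : β j ≠ γ j := by
        intro h
        apply hbg
        ext i
        by_cases hij : i = j
        · subst hij; exact h
        · exact hoff i hij
      have hlt : γ j + 1 ≤ β j := Nat.lt_of_le_of_ne hle (Ne.symm hjne)
      have hdegβ : deg β = β j + ∑ i ∈ Finset.univ.erase j, γ i := by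
        rw [deg, ← Finset.add_sum_erase Finset.univ _ (Finset.mem_univ j)]
        congr 1
        exact Finset.sum_congr rfl fun i hi => hoff i (Finset.mem_erase.1 hi).1
      have hdegγ : deg γ = γ j + ∑ i ∈ Finset.univ.erase j, γ i := by
        rw [deg, ← Finset.add_sum_erase Finset.univ _ (Finset.mem_univ j)]
      have : β j ≤ γ j + 1 := by omega
      have hβj : β j = γ j + 1 := le_antisymm this hlt
      apply hb
      ext i
      by_cases hij : i = j
      · subst hij; simp [hβj]
      · rw [hoff i hij, Finsupp.add_apply, Finsupp.single_apply, if_neg (Ne.symm hij), add_zero]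

lemma coeff_tau_sub (j : Fin s) (g : MvPolynomial (Fin s) ℂ) (γ : Fin s →₀ ℕ)
    (hdeg : g.totalDegree ≤ deg γ + 1) :
    coeff γ (tau s j g - g) = ((γ j : ℂ) + 1) * coeff (γ + Finsupp.single j 1) g := by
  conv_lhs => rw [MvPolynomial.as_sum g]
  conv_rhs => rw [MvPolynomial.as_sum g]
  rw [map_sum (tau s j), MvPolynomial.coeff_sub, coeff_sum, coeff_sum, coeff_sum,
    Finset.mul_sum, ← Finset.sum_sub_distrib]
  refine Finset.sum_congr rfl fun β hβ => ?_
  have h1 : deg β ≤ deg γ + 1 := le_trans (by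
    rw [← deg_eq]; exact le_trans (MvPolynomial.le_totalDegree hβ) hdeg) (le_refl _)
  have := coeff_tau_sub_monomial j β γ (coeff β g) h1
  rw [MvPolynomial.coeff_sub] at this
  exact this

lemma totalDegree_tau_sub_le (j : Fin s) (g : MvPolynomial (Fin s) ℂ) (n : ℕ)
    (h : g.totalDegree ≤ n + 1) : (tau s j g - g).totalDegree ≤ n := by
  rw [totalDegree_le_iff]
  intro δ hδ
  by_contra hlt
  push_neg at hlt
  have h1 : g.totalDegree ≤ deg δ + 1 := le_trans h (by omega)
  have h2 := coeff_tau_sub j g δ h1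
  have h3 : coeff (δ + Finsupp.single j 1) g = 0 := by
    apply coeff_eq_zero_of_deg
    rw [deg_add_single]
    omega
  rw [h3, mul_zero] at h2
  exact MvPolynomial.mem_support_iff.1 hδ h2

lemma tau_mul_comm (i j : Fin s) : tau s i * tau s j = tau s j * tau s i := by
  have key : ∀ a b : Fin s,
      ((MvPolynomial.aeval fun k =>
          (MvPolynomial.X k : MvPolynomial (Fin s) ℂ) + if k = a then 1 else 0).comp
        (MvPolynomial.aeval fun k =>
          (MvPolynomial.X k : MvPolynomial (Fin s) ℂ) + if k = b then 1 else 0)) =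
      MvPolynomial.aeval (fun k => (MvPolynomial.X k : MvPolynomial (Fin s) ℂ) +
        ((if k = a then 1 else 0) + (if k = b then 1 else 0))) := by
    intro a b
    rw [MvPolynomial.comp_aeval]
    congr 1
    funext k
    rw [map_add, aeval_X]
    by_cases h : k = b <;> simp [h, add_assoc]
  have : ∀ a b : Fin s, tau s a * tau s b = ((MvPolynomial.aeval fun k =>
          (MvPolynomial.X k : MvPolynomial (Fin s) ℂ) + if k = a then 1 else 0).comp
        (MvPolynomial.aeval fun k =>
          (MvPolynomial.X k : MvPolynomial (Fin s) ℂ) + if k = b then 1 else 0)).toLinearMap := by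
    intro a b
    rfl
  rw [this, this, key, key]
  congr 2
  funext k
  ring

lemma commute_taus (i j : Fin s) : Commute (tau s i - 1) (tau s j - 1) := by
  have h : Commute (tau s i) (tau s j) := tau_mul_comm i j
  exact (h.sub_left (Commute.one_left _)).sub_right
    ((Commute.one_right _).sub_left (Commute.one_left _))

lemma commute_dpow (j : Fin s) (α : Fin s →₀ ℕ) :
    Commute (tau s j - 1) (dpow s α) := by
  apply Commute.list_prod_right
  intro x hx
  rw [List.mem_map] at hx
  obtain ⟨i, _, rfl⟩ := hx
  exact (commute_taus j i).pow_right _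

lemma dpow_zero' : dpow s 0 = 1 := by
  rw [dpow]
  apply List.prod_eq_one
  intro x hx
  rw [List.mem_map] at hx
  obtain ⟨i, _, rfl⟩ := hx
  simp

lemma dpow_add_single (α : Fin s →₀ ℕ) (j : Fin s) :
    dpow s (α + Finsupp.single j 1) = dpow s α * (tau s j - 1) := by
  classical
  obtain ⟨l1, l2, hl⟩ := List.append_of_mem (List.mem_finRange j)
  have hnd : (l1 ++ j :: l2).Nodup := hl ▸ List.nodup_finRange s
  rw [List.nodup_append] at hnd
  obtain ⟨-, hnd2, hdisj⟩ := hnd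
  have hj1 : j ∉ l1 := fun h => hdisj j h j List.mem_cons_self rfl
  have hj2 : j ∉ l2 := (List.nodup_cons.1 hnd2).1
  have hg_off : ∀ i, i ≠ j →
      (tau s i - 1) ^ ((α + Finsupp.single j 1 : Fin s →₀ ℕ) i) = (tau s i - 1) ^ (α i) := by
    intro i hij
    rw [Finsupp.add_apply, Finsupp.single_apply, if_neg (Ne.symm hij), add_zero]
  have hgj : (tau s j - 1) ^ ((α + Finsupp.single j 1 : Fin s →₀ ℕ) j)
      = (tau s j - 1) ^ (α j) * (tau s j - 1) := by
    rw [Finsupp.add_apply, Finsupp.single_eq_same, pow_succ]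
  have hmap1 : List.map (fun i => (tau s i - 1) ^ ((α + Finsupp.single j 1 : Fin s →₀ ℕ) i)) l1
      = List.map (fun i => (tau s i - 1) ^ (α i)) l1 :=
    List.map_congr_left fun i hi => hg_off i (fun h => hj1 (h ▸ hi))
  have hmap2 : List.map (fun i => (tau s i - 1) ^ ((α + Finsupp.single j 1 : Fin s →₀ ℕ) i)) l2
      = List.map (fun i => (tau s i - 1) ^ (α i)) l2 :=
    List.map_congr_left fun i hi => hg_off i (fun h => hj2 (h ▸ hi))
  have hcomm2 : Commute (tau s j - 1)
      (List.map (fun i => (tau s i - 1) ^ (α i)) l2).prod := by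
    apply Commute.list_prod_right
    intro x hx
    rw [List.mem_map] at hx
    obtain ⟨i, _, rfl⟩ := hx
    exact (commute_taus j i).pow_right _
  rw [dpow, dpow, hl, List.map_append, List.map_append, List.map_cons, List.map_cons,
    List.prod_append, List.prod_append, List.prod_cons, List.prod_cons,
    hmap1, hmap2, hgj]
  rw [mul_assoc ((tau s j - 1) ^ (α j)), hcomm2.eq, ← mul_assoc ((tau s j - 1) ^ (α j)),
    ← mul_assoc, ← mul_assoc]

lemma dpow_succ_apply (α : Fin s →₀ ℕ) (j : Fin s) (f : MvPolynomial (Fin s) ℂ) :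
    dpow s (α + Finsupp.single j 1) f = dpow s α (tau s j f - f) := by
  rw [dpow_add_single, Module.End.mul_apply]
  rfl

lemma eval0_eq_coeff_zero (p : MvPolynomial (Fin s) ℂ) :
    MvPolynomial.eval 0 p = coeff 0 p := by
  rw [MvPolynomial.eval_zero]
  rfl

lemma deg_eq_zero_iff (γ : Fin s →₀ ℕ) : deg γ = 0 ↔ γ = 0 := by
  constructor
  · intro h
    ext i
    have := (Finset.sum_eq_zero_iff.1 h) i (Finset.mem_univ i)
    simpa using this
  · rintro rfl
    simp [deg]

lemma coeff_zero_dpow : ∀ (n : ℕ) (γ : Fin s →₀ ℕ), deg γ = n →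
    ∀ g : MvPolynomial (Fin s) ℂ, g.totalDegree ≤ n →
    coeff 0 (dpow s γ g) = fact s γ * coeff γ g := by
  intro n
  induction n with
  | zero =>
    intro γ hγ g hg
    rw [deg_eq_zero_iff] at hγ
    subst hγ
    rw [dpow_zero']
    have h1 : fact s (0 : Fin s →₀ ℕ) = 1 := by simp [fact]
    rw [h1, one_mul]
    rfl
  | succ n ih =>
    intro γ hγ g hg
    have hne : γ ≠ 0 := by
      intro h
      rw [h, (deg_eq_zero_iff (0 : Fin s →₀ ℕ)).2 rfl] at hγ
      omega
    have : ∃ j, γ j ≠ 0 := by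
      by_contra h
      push_neg at h
      exact hne (Finsupp.ext fun i => h i)
    obtain ⟨j, hj⟩ := this
    set γ' : Fin s →₀ ℕ := γ - Finsupp.single j 1 with hγ'def
    have hsum : γ' + Finsupp.single j 1 = γ := by
      ext i
      rw [Finsupp.add_apply, Finsupp.tsub_apply]
      by_cases hij : i = j
      · subst hij
        rw [Finsupp.single_eq_same]
        omega
      · rw [Finsupp.single_apply, if_neg (Ne.symm hij)]
        omega
    have hdegγ' : deg γ' = n := by
      have := deg_add_single γ' j
      rw [hsum] at this
      omega
    have htd : (tau s j g - g).totalDegree ≤ n := totalDegree_tau_sub_le j g n hg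
    calc coeff 0 (dpow s γ g) = coeff 0 (dpow s (γ' + Finsupp.single j 1) g) := by rw [hsum]
      _ = coeff 0 (dpow s γ' (tau s j g - g)) := by rw [dpow_succ_apply]
      _ = fact s γ' * coeff γ' (tau s j g - g) := ih γ' hdegγ' _ htd
      _ = fact s γ' * (((γ' j : ℂ) + 1) * coeff (γ' + Finsupp.single j 1) g) := by
          rw [coeff_tau_sub j g γ' (by omega)]
      _ = fact s γ * coeff γ g := by
          rw [← hsum, fact_add_single]
          ring

lemma eval0_dpow_eq_zero {γ : Fin s →₀ ℕ} {g : MvPolynomial (Fin s) ℂ}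
    (h : g.totalDegree < deg γ) : MvPolynomial.eval 0 (dpow s γ g) = 0 := by
  rw [eval0_eq_coeff_zero, coeff_zero_dpow (deg γ) γ rfl g (le_of_lt h),
    coeff_eq_zero_of_deg h, mul_zero]

noncomputable def Bnd (f : MvPolynomial (Fin s) ℂ) : Fin s →₀ ℕ :=
  Finsupp.equivFunOnFinite.symm (fun _ : Fin s => f.totalDegree)

lemma support_subset_Lmap (f : MvPolynomial (Fin s) ℂ) :
    Function.support (fun α : Fin s →₀ ℕ =>
      (MvPolynomial.eval 0 (dpow s α f) / fact s α) • monomial α (1 : ℂ))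
      ⊆ ↑(Finset.Iic (Bnd f)) := by
  intro α hα
  simp only [Function.mem_support] at hα
  have hev : MvPolynomial.eval 0 (dpow s α f) ≠ 0 := by
    intro h
    apply hα
    rw [h, zero_div, zero_smul]
  have hdeg : deg α ≤ f.totalDegree := by
    by_contra h
    exact hev (eval0_dpow_eq_zero (by omega))
  simp only [Finset.coe_Iic, Set.mem_Iic]
  rw [Finsupp.le_def]
  intro i
  have h1 : α i ≤ deg α := Finset.single_le_sum (fun j _ => Nat.zero_le (α j)) (Finset.mem_univ i)
  have h2 : Bnd f i = f.totalDegree := rfl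
  omega

lemma Lmap_eq_sum (f : MvPolynomial (Fin s) ℂ) :
    Lmap s f = ∑ α ∈ Finset.Iic (Bnd f),
      (MvPolynomial.eval 0 (dpow s α f) / fact s α) • monomial α (1 : ℂ) :=
  finsum_eq_sum_of_support_subset _ (support_subset_Lmap f)

lemma coeff_Lmap (f : MvPolynomial (Fin s) ℂ) (γ : Fin s →₀ ℕ) :
    coeff γ (Lmap s f) = MvPolynomial.eval 0 (dpow s γ f) / fact s γ := by
  classical
  rw [Lmap_eq_sum, coeff_sum]
  simp only [coeff_smul, coeff_monomial, smul_eq_mul]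
  by_cases h : γ ∈ Finset.Iic (Bnd f)
  · rw [Finset.sum_eq_single γ]
    · rw [if_pos rfl, mul_one]
    · intro α _ hαγ
      rw [if_neg hαγ, mul_zero]
    · intro hγ
      exact absurd h hγ
  · have hsum : ∀ α ∈ Finset.Iic (Bnd f),
        (MvPolynomial.eval 0 (dpow s α f) / fact s α) * (if α = γ then 1 else 0) = 0 := by
      intro α hα
      by_cases he : α = γ
      · subst he; exact absurd hα h
      · rw [if_neg he, mul_zero]
    rw [Finset.sum_eq_zero hsum]
    have : f.totalDegree < deg γ := by
      simp only [Finset.mem_Iic, Finsupp.le_def, not_forall, not_le] at h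
      obtain ⟨i, hi⟩ := h
      have h2 : Bnd f i = f.totalDegree := rfl
      have h1 : γ i ≤ deg γ := Finset.single_le_sum (fun j _ => Nat.zero_le (γ j))
        (Finset.mem_univ i)
      omega
    rw [eval0_dpow_eq_zero this, zero_div]

lemma coeff_pderiv' (j : Fin s) (p : MvPolynomial (Fin s) ℂ) (γ : Fin s →₀ ℕ) :
    coeff γ (MvPolynomial.pderiv j p) = ((γ j : ℂ) + 1) * coeff (γ + Finsupp.single j 1) p := by
  classical
  conv_lhs => rw [MvPolynomial.as_sum p]
  rw [map_sum (MvPolynomial.pderiv j), coeff_sum]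
  simp only [MvPolynomial.pderiv_monomial, coeff_monomial]
  have hkey : (γ + Finsupp.single j 1 : Fin s →₀ ℕ) - Finsupp.single j 1 = γ := by
    ext i
    rw [Finsupp.tsub_apply, Finsupp.add_apply]
    omega
  have hval : ((γ + Finsupp.single j 1 : Fin s →₀ ℕ) j : ℂ) = (γ j : ℂ) + 1 := by
    rw [Finsupp.add_apply, Finsupp.single_eq_same]
    push_cast
    ring
  rw [Finset.sum_eq_single (γ + Finsupp.single j 1)]
  · rw [if_pos hkey, hval]
    ring
  · intro β _ hβ
    by_cases hc : β - Finsupp.single j 1 = γ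
    · rw [if_pos hc]
      have hβj : β j = 0 := by
        by_contra hbj
        apply hβ
        ext i
        have h5 : β i - (if j = i then 1 else 0) = γ i := by
          have := congrArg (fun f : Fin s →₀ ℕ => f i) hc
          simpa [Finsupp.tsub_apply, Finsupp.single_apply] using this
        simp only [Finsupp.add_apply, Finsupp.single_apply]
        by_cases hij : j = i
        · subst hij
          rw [if_pos rfl] at h5 ⊢
          omega
        · rw [if_neg hij] at h5 ⊢
          omega
      rw [hβj]
      push_cast
      ring
    · rw [if_neg hc]
  · intro hns
    rw [if_pos hkey, hval]
    rw [MvPolynomial.notMem_support_iff.1 hns]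
    ring

lemma pderiv_Lmap (j : Fin s) (f : MvPolynomial (Fin s) ℂ) :
    MvPolynomial.pderiv j (Lmap s f) = Lmap s (tau s j f - f) := by
  ext γ
  rw [coeff_pderiv', coeff_Lmap, coeff_Lmap, fact_add_single, ← dpow_succ_apply]
  have h1 : ((γ j : ℂ) + 1) ≠ 0 := by
    have := Nat.cast_add_one_ne_zero (R := ℂ) (γ j)
    push_cast at this ⊢
    exact this
  have h2 : fact s γ ≠ 0 := fact_ne_zero γ
  field_simp

lemma Lmap_injective : Function.Injective (Lmap s) := by
  intro f g h
  by_contra hne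
  have hp : f - g ≠ 0 := sub_ne_zero.2 hne
  have hc : ∀ γ : Fin s →₀ ℕ, MvPolynomial.eval 0 (dpow s γ (f - g)) = 0 := by
    intro γ
    have h1 : coeff γ (Lmap s f) = coeff γ (Lmap s g) := by rw [h]
    rw [coeff_Lmap, coeff_Lmap] at h1
    have h2 : MvPolynomial.eval 0 (dpow s γ f) = MvPolynomial.eval 0 (dpow s γ g) := by
      field_simp [fact_ne_zero γ] at h1
      exact h1
    rw [map_sub, map_sub, h2, sub_self]
  have hsup : (f - g).support.Nonempty := Finset.nonempty_iff_ne_empty.2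
    (fun h0 => hp (MvPolynomial.support_eq_empty.1 h0))
  obtain ⟨α, hα, hsupeq⟩ := Finset.exists_mem_eq_sup (f - g).support hsup
    (fun δ : Fin s →₀ ℕ => δ.sum fun _ e => e)
  have htd : (f - g).totalDegree = deg α := by
    rw [MvPolynomial.totalDegree, hsupeq, deg_eq]
  have h3 := coeff_zero_dpow (deg α) α rfl (f - g) (le_of_eq htd)
  rw [← eval0_eq_coeff_zero, hc α] at h3
  have h4 : coeff α (f - g) ≠ 0 := MvPolynomial.mem_support_iff.1 hα
  exact h4 (by
    have := h3.symm
    rcases mul_eq_zero.1 this with h5 | h5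
    · exact absurd h5 (fact_ne_zero α)
    · exact h5)

theorem main_iff (s : ℕ) (Q : Submodule ℂ (MvPolynomial (Fin s) ℂ)) :
    (∀ q ∈ Q, ∀ j : Fin s, tau s j q ∈ Q) ↔
      (∀ p ∈ Lmap s '' (Q : Set (MvPolynomial (Fin s) ℂ)), ∀ j : Fin s,
        MvPolynomial.pderiv j p ∈ Lmap s '' (Q : Set (MvPolynomial (Fin s) ℂ))) := by
  constructor
  · rintro h p ⟨q, hq, rfl⟩ j
    rw [pderiv_Lmap]
    exact ⟨tau s j q - q, Q.sub_mem (h q hq j) hq, rfl⟩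
  · intro h q hq j
    have h1 := h (Lmap s q) ⟨q, hq, rfl⟩ j
    rw [pderiv_Lmap] at h1
    obtain ⟨r, hr, hre⟩ := h1
    have h2 : r = tau s j q - q := Lmap_injective hre
    have h3 : tau s j q - q ∈ Q := h2 ▸ hr
    have := Q.add_mem h3 hq
    rwa [sub_add_cancel] at this

end Stmt17


open MvPolynomial Finset in
/-- a finite dimensional polynomial subspace `Q` is shift invariant
iff its image `LQ` under `L f = ∑_α ((τ-I)^α f)(0)/α! · x^α` is D-invariant. -/
theorem shift_invariant_iff_image_D_invariant (s : ℕ)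
    (Q : Submodule ℂ (MvPolynomial (Fin s) ℂ)) (hQ : FiniteDimensional ℂ Q) :
    let shiftP : Fin s → MvPolynomial (Fin s) ℂ → MvPolynomial (Fin s) ℂ :=
      fun j => MvPolynomial.aeval fun i =>
        (MvPolynomial.X i : MvPolynomial (Fin s) ℂ) + if i = j then 1 else 0
    let τ : Fin s → Module.End ℂ (MvPolynomial (Fin s) ℂ) := fun j =>
      (MvPolynomial.aeval fun i =>
        (MvPolynomial.X i : MvPolynomial (Fin s) ℂ) +
          if i = j then 1 else 0).toLinearMap
    let Δpow : (Fin s →₀ ℕ) → Module.End ℂ (MvPolynomial (Fin s) ℂ) := fun α =>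
      (((List.finRange s).map fun j => (τ j - 1) ^ (α j)).prod)
    let fact : (Fin s →₀ ℕ) → ℂ := fun α => ∏ j, (Nat.factorial (α j) : ℂ)
    let L : MvPolynomial (Fin s) ℂ → MvPolynomial (Fin s) ℂ := fun f =>
      ∑ᶠ α : Fin s →₀ ℕ,
        (MvPolynomial.eval 0 (Δpow α f) / fact α) • MvPolynomial.monomial α (1 : ℂ)
    (∀ q ∈ Q, ∀ j : Fin s, shiftP j q ∈ Q) ↔
      (∀ p ∈ L '' (Q : Set (MvPolynomial (Fin s) ℂ)), ∀ j : Fin s,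
        MvPolynomial.pderiv j p ∈ L '' (Q : Set (MvPolynomial (Fin s) ℂ))) := by
  intro shiftP τ Δpow fact L
  exact Stmt17.main_iff s Q
end

section
/- Let Θ ⊂ (ℂ∖{0})^s be a finite set of n distinct points. Then the hyperbolic cross index set Υ_n = {α ∈ ℕ_0^s : ∏_{j=1}^s (1+α_j) ≤ n} admits interpolation at Θ: the Vandermonde matrix V(Θ; Υ_n) = (θ^α)_{θ∈Θ, α∈Υ_n} has full row rank n. -/
open MvPolynomial Pointwise

private lemma mem_support_C {s : ℕ} {a : ℂ} {d : Fin s →₀ ℕ}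
    (hd : d ∈ (C a : MvPolynomial (Fin s) ℂ).support) : d = 0 := by
  classical
  by_contra h
  have : coeff d (C a : MvPolynomial (Fin s) ℂ) = 0 := by
    rw [coeff_C, if_neg (fun h0 => h h0.symm)]
  exact (MvPolynomial.mem_support_iff.mp hd) this

private lemma mem_support_one {s : ℕ} {d : Fin s →₀ ℕ}
    (hd : d ∈ (1 : MvPolynomial (Fin s) ℂ).support) : d = 0 := by
  have : (1 : MvPolynomial (Fin s) ℂ) = C 1 := by simp
  exact mem_support_C (this ▸ hd)

/-- support of the separator polynomial `∏ (X 0 - C c)` -/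
private lemma support_sep (s : ℕ) (W : Finset ℂ) :
    ∀ d ∈ (∏ c ∈ W, (X (0 : Fin (s+1)) - C c : MvPolynomial (Fin (s+1)) ℂ)).support,
      d 0 ≤ W.card ∧ ∀ i : Fin s, d i.succ = 0 := by
  classical
  induction W using Finset.induction_on with
  | empty =>
    intro d hd
    rw [Finset.prod_empty] at hd
    rw [mem_support_one hd]
    simp
  | @insert a W ha ih =>
    intro d hd
    rw [Finset.prod_insert ha] at hd
    have hd2 := MvPolynomial.support_mul _ _ hd
    rw [Finset.mem_add] at hd2
    obtain ⟨d₁, hd₁, d₂, hd₂, hsum⟩ := hd2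
    have h1 : d₁ = Finsupp.single 0 1 ∨ d₁ = 0 := by
      have := MvPolynomial.support_sub (Fin (s+1)) (X 0) (C a) hd₁
      rw [Finset.mem_union] at this
      rcases this with h | h
      · left
        rw [MvPolynomial.support_X] at h
        simpa using h
      · right; exact mem_support_C h
    obtain ⟨h20, h2s⟩ := ih d₂ hd₂
    have hcard : (insert a W).card = W.card + 1 := Finset.card_insert_of_notMem ha
    subst hsum
    constructor
    · rcases h1 with h | h <;> subst h <;> simp [hcard] <;> omega
    · intro i
      have h1i : d₁ i.succ = 0 := by
        rcases h1 with h | h <;> subst h <;>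
          simp [Finsupp.single_apply, (Fin.succ_ne_zero i).symm]
      simp [h1i, h2s i]

/-- Key interpolation lemma: the hyperbolic cross of parameter `Θ.card`
admits interpolation at any finite set `Θ` of distinct points. -/
private lemma cross_interp : ∀ (N s : ℕ) (Θ : Finset (Fin s → ℂ)), s + Θ.card ≤ N →
    ∀ y : (Fin s → ℂ) → ℂ, ∃ p : MvPolynomial (Fin s) ℂ,
      (∀ d ∈ p.support, (∏ j, (1 + d j)) ≤ Θ.card) ∧
      ∀ θ ∈ Θ, MvPolynomial.eval θ p = y θ := by
  classical
  intro N
  induction N with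
  | zero =>
    intro s Θ hN y
    have hs : s = 0 := by omega
    have hΘ : Θ.card = 0 := by omega
    rw [Finset.card_eq_zero] at hΘ
    exact ⟨0, by simp, by simp [hΘ]⟩
  | succ N IH =>
    intro s Θ hN y
    rcases Θ.eq_empty_or_nonempty with hΘe | hΘne
    · exact ⟨0, by simp, by simp [hΘe]⟩
    match s with
    | 0 =>
      obtain ⟨θ₀, hθ₀⟩ := hΘne
      refine ⟨C (y θ₀), ?_, ?_⟩
      · intro d hd
        rw [mem_support_C hd]
        simpa using Finset.card_pos.mpr ⟨θ₀, hθ₀⟩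
      · intro θ hθ
        have : θ = θ₀ := funext fun i => Fin.elim0 i
        subst this
        simp
    | s + 1 =>
      set n := Θ.card with hn
      -- fibers of the first coordinate
      set V : Finset ℂ := Θ.image (fun θ => θ 0) with hV
      have hVne : V.Nonempty := hΘne.image _
      obtain ⟨c, hcV, hcmin⟩ :=
        Finset.exists_min_image V (fun c => (Θ.filter (fun θ : Fin (s+1) → ℂ => θ 0 = c)).card) hVne
      set Θc : Finset (Fin (s+1) → ℂ) := Θ.filter (fun θ => θ 0 = c) with hΘc
      set Θ' : Finset (Fin (s+1) → ℂ) := Θ.filter (fun θ => ¬ θ 0 = c) with hΘ'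
      have hΘcne : Θc.Nonempty := by
        rw [hV, Finset.mem_image] at hcV
        obtain ⟨θ, hθ, hθc⟩ := hcV
        exact ⟨θ, Finset.mem_filter.mpr ⟨hθ, hθc⟩⟩
      have hsplit : Θc.card + Θ'.card = n :=
        Finset.card_filter_add_card_filter_not (s := Θ) (fun θ : Fin (s+1) → ℂ => θ 0 = c)
      have hnc1 : 1 ≤ Θc.card := Finset.card_pos.mpr hΘcne
      -- m * nc ≤ n
      have hfiber : n = ∑ c' ∈ V, (Θ.filter (fun θ => θ 0 = c')).card :=
        Finset.card_eq_sum_card_fiberwise (fun θ hθ => Finset.mem_image_of_mem _ hθ)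
      have hmn : V.card * Θc.card ≤ n := by
        calc V.card * Θc.card = V.card • Θc.card := rfl
        _ ≤ ∑ c' ∈ V, (Θ.filter (fun θ => θ 0 = c')).card :=
            Finset.card_nsmul_le_sum V _ _ (fun c' hc' => hcmin c' hc')
        _ = n := hfiber.symm
      clear hfiber
      -- interpolant q on Θ'
      obtain ⟨q, hq_supp, hq⟩ := IH (s+1) Θ' (by
        have : Θ'.card ≤ n - 1 := by omega
        omega) y
      -- projected fiber points
      set π : (Fin (s+1) → ℂ) → (Fin s → ℂ) := fun θ i => θ i.succ with hπ
      have hcons : ∀ θ ∈ Θc, Fin.cons c (π θ) = θ := by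
        intro θ hθ
        have hθ0 : θ 0 = c := (Finset.mem_filter.mp hθ).2
        funext i
        refine Fin.cases ?_ ?_ i
        · simp [hθ0]
        · intro i; simp [hπ]
      set Θc' : Finset (Fin s → ℂ) := Θc.image π with hΘc'
      have hΘc'card : Θc'.card ≤ Θc.card := Finset.card_image_le
      set G : ℂ := ∏ c' ∈ V.erase c, (c - c') with hG
      have hGne : G ≠ 0 := by
        rw [hG]
        exact Finset.prod_ne_zero_iff.mpr fun c' hc' =>
          sub_ne_zero.mpr (Ne.symm (Finset.mem_erase.mp hc').1)
      obtain ⟨r', hr_supp, hr⟩ := IH s Θc' (by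
        have := hΘc'card
        omega) (fun φ => (y (Fin.cons c φ) - MvPolynomial.eval (Fin.cons c φ) q) / G)
      set g : MvPolynomial (Fin (s+1)) ℂ := ∏ c' ∈ V.erase c, (X 0 - C c') with hg
      refine ⟨q + g * MvPolynomial.rename Fin.succ r', ?_, ?_⟩
      · -- support bound
        intro d hd
        rcases Finset.mem_union.mp (MvPolynomial.support_add hd) with hd | hd
        · calc (∏ j, (1 + d j)) ≤ Θ'.card := hq_supp d hd
          _ ≤ n := by omega
        · obtain ⟨d₁, hd₁, d₂, hd₂, hsum⟩ := Finset.mem_add.mp (MvPolynomial.support_mul _ _ hd)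
          obtain ⟨h10, h1s⟩ := support_sep s (V.erase c) d₁ hd₁
          rw [MvPolynomial.support_rename_of_injective (Fin.succ_injective s),
            Finset.mem_image] at hd₂
          obtain ⟨d', hd', rfl⟩ := hd₂
          have h20 : Finsupp.mapDomain Fin.succ d' 0 = 0 :=
            Finsupp.mapDomain_notin_range d' 0 (by
              rintro ⟨i, hi⟩; exact Fin.succ_ne_zero i hi)
          have h2s : ∀ i : Fin s, Finsupp.mapDomain Fin.succ d' i.succ = d' i :=
            fun i => Finsupp.mapDomain_apply (Fin.succ_injective s) d' i
          subst hsum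
          have hprod : (∏ j, (1 + (d₁ + Finsupp.mapDomain Fin.succ d') j))
              = (1 + d₁ 0) * ∏ i : Fin s, (1 + d' i) := by
            rw [Fin.prod_univ_succ]
            congr 1
            · simp [h20]
            · exact Finset.prod_congr rfl fun i _ => by simp [h1s i, h2s i]
          rw [hprod]
          have hVec : (V.erase c).card = V.card - 1 := Finset.card_erase_of_mem hcV
          have h1 : 1 + d₁ 0 ≤ V.card := by
            have hV1 : 1 ≤ V.card := Finset.card_pos.mpr hVne
            omega
          have h2 : (∏ i : Fin s, (1 + d' i)) ≤ Θc.card :=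
            le_trans (hr_supp d' hd') hΘc'card
          calc (1 + d₁ 0) * ∏ i : Fin s, (1 + d' i) ≤ V.card * Θc.card :=
              Nat.mul_le_mul h1 h2
          _ ≤ n := hmn
      · -- interpolation
        intro θ hθ
        have heg : MvPolynomial.eval θ g = ∏ c' ∈ V.erase c, (θ 0 - c') := by
          rw [hg, map_prod]
          exact Finset.prod_congr rfl fun c' _ => by simp
        by_cases hθ0 : θ 0 = c
        · -- θ in the fiber Θc
          have hθc : θ ∈ Θc := Finset.mem_filter.mpr ⟨hθ, hθ0⟩
          have hπθ : π θ ∈ Θc' := Finset.mem_image_of_mem _ hθc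
          have hevr : MvPolynomial.eval θ (MvPolynomial.rename Fin.succ r')
              = (y θ - MvPolynomial.eval θ q) / G := by
            rw [MvPolynomial.eval_rename]
            have : θ ∘ Fin.succ = π θ := rfl
            rw [this, hr (π θ) hπθ, hcons θ hθc]
          have hegc : MvPolynomial.eval θ g = G := by
            rw [heg, hG]
            exact Finset.prod_congr rfl fun c' _ => by rw [hθ0]
          rw [map_add, map_mul, hegc, hevr]
          field_simp
          ring
        · -- θ in Θ'
          have hθ' : θ ∈ Θ' := Finset.mem_filter.mpr ⟨hθ, hθ0⟩
          have hegz : MvPolynomial.eval θ g = 0 := by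
            rw [heg]
            exact Finset.prod_eq_zero (Finset.mem_erase.mpr
              ⟨hθ0, Finset.mem_image_of_mem _ hθ⟩) (sub_self _)
          rw [map_add, map_mul, hegz, zero_mul, add_zero]
          exact hq θ hθ'

open Finset in
/-- the hyperbolic cross `Υ_n` admits interpolation at any `n`
distinct points of the algebraic torus: the Vandermonde matrix `V(Θ; Υ_n)` has
full row rank `n`. -/
theorem hyperbolic_cross_interpolation (s n : ℕ) (Θ : Finset (Fin s → ℂ))
    (hcard : Θ.card = n) (hΘ : ∀ θ ∈ Θ, ∀ j, θ j ≠ 0)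
    (Υ : Finset (Fin s → ℕ))
    (hΥ : ∀ α : Fin s → ℕ, α ∈ Υ ↔ (∏ j, (1 + α j)) ≤ n) :
    Matrix.rank (Matrix.of fun (θ : Θ) (α : Υ) => ∏ j, θ.1 j ^ α.1 j) = n := by
  classical
  set M : Matrix Θ Υ ℂ := Matrix.of fun (θ : Θ) (α : Υ) => ∏ j, θ.1 j ^ α.1 j with hM
  have hsurj : Function.Surjective M.mulVecLin := by
    intro y
    obtain ⟨p, hp_supp, hp⟩ := cross_interp (s + n) s Θ (by omega)
      (fun θ => if hθ : θ ∈ Θ then y ⟨θ, hθ⟩ else 0)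
    set e : (Fin s → ℕ) → (Fin s →₀ ℕ) := fun f => Finsupp.equivFunOnFinite.symm f with he
    refine ⟨fun α => MvPolynomial.coeff (e α.1) p, ?_⟩
    have hsub : p.support ⊆ Υ.image e := by
      intro d hd
      refine Finset.mem_image.mpr ⟨⇑d, ?_, Finsupp.equivFunOnFinite_symm_coe d⟩
      exact (hΥ ⇑d).mpr (hcard ▸ hp_supp d hd)
    have hinj : Function.Injective e := fun a b h =>
      Finsupp.equivFunOnFinite.symm.injective h
    have key : ∀ θ : Θ, M.mulVec (fun α => MvPolynomial.coeff (e α.1) p) θ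
        = MvPolynomial.eval θ.1 p := by
      intro θ
      rw [MvPolynomial.eval_eq']
      show (∑ α : Υ, (∏ j, θ.1 j ^ α.1 j) * MvPolynomial.coeff (e α.1) p) = _
      rw [Finset.sum_coe_sort Υ
        (fun α => (∏ j, θ.1 j ^ α j) * MvPolynomial.coeff (e α) p)]
      calc ∑ α ∈ Υ, (∏ j, θ.1 j ^ α j) * MvPolynomial.coeff (e α) p
          = ∑ d ∈ Υ.image e, MvPolynomial.coeff d p * ∏ i, θ.1 i ^ d i := by
            rw [Finset.sum_image (g := e)
              (f := fun d => MvPolynomial.coeff d p * ∏ i, θ.1 i ^ d i)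
              (fun x _ y _ h => hinj h)]
            refine Finset.sum_congr rfl fun α _ => ?_
            rw [mul_comm]
            congr 1
        _ = ∑ d ∈ p.support, MvPolynomial.coeff d p * ∏ i, θ.1 i ^ d i :=
            (Finset.sum_subset hsub (fun d _ hd => by
              rw [MvPolynomial.notMem_support_iff.mp hd, zero_mul])).symm
    rw [Matrix.mulVecLin_apply]
    funext θ
    rw [key θ, hp θ.1 θ.2, dif_pos θ.2]
  have hrange : LinearMap.range M.mulVecLin = ⊤ := LinearMap.range_eq_top.mpr hsurj
  rw [Matrix.rank, hrange, finrank_top, Module.finrank_fintype_fun_eq_card,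
    Fintype.card_coe, hcard]
end
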